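/- For all integers k, l ≥ 1, all vectors m₁, …, m_k ∈ ℤ^l, and all signs ε₁, …, ε_k ∈ {−1, +1}, one has ∫_{[0,2π]^l} ∫_{[0,2π]^l} ∏_{i=1}^k ( cos(m_i·θ) + ε_i · cos(m_i·θ′) ) ∏_{j=1}^l dθ_j dθ′_j ≥ 0, where the integrals are with respect to Lebesgue measure and m·θ := Σ_{j=1}^l m_j θ_j. -/

import Mathlib

open MeasureTheory Real

noncomputable section

namespace GinAux

variable {k l : ℕ}

lemma oneDim (n : ℤ) :
    ∫ x in Set.Icc (0:ℝ) (2*π), Complex.exp ((n : ℂ) * Complex.I * x) =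
      if n = 0 then ((2*π : ℝ) : ℂ) else 0 := by
  rw [MeasureTheory.integral_Icc_eq_integral_Ioc,
    ← intervalIntegral.integral_of_le (by positivity : (0:ℝ) ≤ 2*π)]
  rcases eq_or_ne n 0 with h | h
  · simp [h]
  · rw [if_neg h, integral_exp_mul_complex (by simp [Complex.ext_iff, h] : (n:ℂ) * Complex.I ≠ 0)]
    have : Complex.exp ((n:ℂ) * Complex.I * (2*π)) = 1 := by
      rw [show (n:ℂ) * Complex.I * (2*π) = (n:ℤ) * (2 * (π:ℂ) * Complex.I) by push_cast; ring]
      exact Complex.exp_int_mul_two_pi_mul_I n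
    simp [this]

/-- the box -/
def B (l : ℕ) : Set (Fin l → ℝ) := Set.univ.pi fun _ : Fin l => Set.Icc (0 : ℝ) (2 * π)

lemma measurableSet_B : MeasurableSet (B l) :=
  MeasurableSet.univ_pi fun _ => measurableSet_Icc

lemma isCompact_B : IsCompact (B l) := isCompact_univ_pi fun _ => isCompact_Icc

/-- exponential character -/
def e (n : Fin l → ℤ) (θ : Fin l → ℝ) : ℂ :=
  Complex.exp ((∑ j, (n j : ℝ) * θ j : ℝ) * Complex.I)

lemma continuous_e (n : Fin l → ℤ) : Continuous (e n) := by
  apply Complex.continuous_exp.comp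
  exact (Complex.continuous_ofReal.comp
    (continuous_finset_sum _ fun j _ => continuous_const.mul (continuous_apply j))).mul
    continuous_const

lemma integrableOn_e (n : Fin l → ℤ) : IntegrableOn (e n) (B l) :=
  (continuous_e n).continuousOn.integrableOn_compact isCompact_B

lemma e_eq_prod (n : Fin l → ℤ) (θ : Fin l → ℝ) :
    e n θ = ∏ j, Complex.exp ((n j : ℂ) * Complex.I * (θ j)) := by
  rw [e, ← Complex.exp_sum]
  congr 1
  push_cast
  rw [Finset.sum_mul]
  exact Finset.sum_congr rfl fun j _ => by ring

lemma prod_e (f : Fin k → Fin l → ℤ) (θ : Fin l → ℝ) :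
    ∏ i, e (f i) θ = e (fun j => ∑ i, f i j) θ := by
  unfold e
  rw [← Complex.exp_sum]
  congr 1
  rw [← Finset.sum_mul]
  congr 1
  push_cast
  rw [Finset.sum_comm]
  exact Finset.sum_congr rfl fun j _ => (Finset.sum_mul _ _ _).symm

lemma e_zero (θ : Fin l → ℝ) : e (fun _ => 0) θ = 1 := by
  simp [e]

lemma myOfRealIntegral {α : Type*} [MeasurableSpace α] (μ : MeasureTheory.Measure α) (f : α → ℝ) :
    ((∫ x, f x ∂μ : ℝ) : ℂ) = ∫ x, ((f x : ℝ) : ℂ) ∂μ :=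
  (integral_ofReal (𝕜 := ℂ)).symm

/-- delta -/
def d (n : Fin l → ℤ) : ℝ := if n = 0 then 1 else 0

lemma d_nonneg (n : Fin l → ℤ) : 0 ≤ d n := by unfold d; split <;> norm_num

lemma integral_e (n : Fin l → ℤ) :
    ∫ θ in B l, e n θ = (((2*π)^l * d n : ℝ) : ℂ) := by
  rw [← MeasureTheory.integral_indicator measurableSet_B]
  have h1 : ∀ θ : Fin l → ℝ, (B l).indicator (e n) θ =
      ∏ j, (Set.Icc (0:ℝ) (2*π)).indicator (fun x => Complex.exp ((n j : ℂ) * Complex.I * x)) (θ j) := by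
    intro θ
    by_cases h : θ ∈ B l
    · rw [Set.indicator_of_mem h, e_eq_prod]
      exact Finset.prod_congr rfl fun j _ => by
        rw [Set.indicator_of_mem (h j (Set.mem_univ j))]
    · rw [Set.indicator_of_notMem h]
      have h' : ¬ ∀ j : Fin l, θ j ∈ Set.Icc (0:ℝ) (2*π) :=
        fun hall => h (Set.mem_univ_pi.mpr hall)
      push_neg at h'
      obtain ⟨j, hj⟩ := h'
      exact (Finset.prod_eq_zero (Finset.mem_univ j) (by
        rw [Set.indicator_of_notMem hj])).symm
  simp_rw [h1]
  rw [MeasureTheory.integral_fintype_prod_volume_eq_prod (ι := Fin l)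
    (f := fun j x => (Set.Icc (0:ℝ) (2*π)).indicator (fun x => Complex.exp ((n j : ℂ) * Complex.I * x)) x)]
  have h2 : ∀ j : Fin l, (∫ x, (Set.Icc (0:ℝ) (2*π)).indicator
      (fun x => Complex.exp ((n j : ℂ) * Complex.I * x)) x) =
      if n j = 0 then ((2*π : ℝ):ℂ) else 0 := fun j => by
    rw [MeasureTheory.integral_indicator measurableSet_Icc, oneDim]
  simp_rw [h2]
  rcases eq_or_ne n 0 with h | h
  · simp [h, d]
  · obtain ⟨j, hj⟩ := Function.ne_iff.mp h
    have hj' : n j ≠ 0 := hj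
    rw [Finset.prod_eq_zero (Finset.mem_univ j) (by simp [hj']), d, if_neg h]
    simp

/-! ### combinatorial part -/

def sZ (b : Bool) : ℤ := if b then 1 else -1

def cR (ε : Fin k → ℝ) (i : Fin k) (b : Bool) : ℝ := if b then 1/2 else ε i / 2

def chi (ε : Fin k → ℝ) (i : Fin k) (b : Bool) : ℝ :=
  (1 + ε i)/2 + (1 - ε i)/2 * (sZ b : ℝ)

def N1 (m : Fin k → Fin l → ℤ) (g : Fin k → Bool × Bool) : Fin l → ℤ :=
  fun j => ∑ i, if (g i).1 then sZ ((g i).2) * m i j else 0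

def N2 (m : Fin k → Fin l → ℤ) (g : Fin k → Bool × Bool) : Fin l → ℤ :=
  fun j => ∑ i, if (g i).1 then 0 else sZ ((g i).2) * m i j

def M (m : Fin k → Fin l → ℤ) (τ : Fin k → Bool) : Fin l → ℤ :=
  fun j => ∑ i, sZ (τ i) * m i j

lemma d_mul (A C : Fin l → ℤ) : d A * d C = if (A = 0 ∧ C = 0) then 1 else 0 := by
  unfold d; by_cases hA : A = 0 <;> by_cases hC : C = 0 <;> simp [hA, hC]

lemma dd (A C : Fin l → ℤ) :
    d A * d C = d (fun j => A j + C j) * d (fun j => A j - C j) := by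
  rw [d_mul, d_mul]
  refine (if_congr ?_ rfl rfl).symm
  constructor
  · rintro ⟨h1, h2⟩
    constructor <;> funext j <;>
    · have e1 := congrFun h1 j
      have e2 := congrFun h2 j
      simp only [Pi.zero_apply] at e1 e2 ⊢
      omega
  · rintro ⟨rfl, rfl⟩
    constructor <;> funext j <;> simp

def eBB : Bool × Bool ≃ Bool × Bool where
  toFun p := (p.2, if p.1 then p.2 else !p.2)
  invFun q := (q.1 == q.2, q.1)
  left_inv := by decide
  right_inv := by decide

def EE (k : ℕ) : (Fin k → Bool × Bool) ≃ (Fin k → Bool) × (Fin k → Bool) :=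
  (Equiv.piCongrRight fun _ => eBB).trans (Equiv.arrowProdEquivProdArrow _ _ _)

lemma EE_symm_apply (q : (Fin k → Bool) × (Fin k → Bool)) (i : Fin k) :
    (EE k).symm q i = (q.1 i == q.2 i, q.1 i) := rfl

lemma coeff_id (ε : Fin k → ℝ) (i : Fin k) (hε : ε i = 1 ∨ ε i = -1) (a b : Bool) :
    cR ε i (a == b) = chi ε i a * chi ε i b / 2 := by
  rcases hε with h | h <;> cases a <;> cases b <;> simp [cR, chi, sZ, h] <;> norm_num

lemma N_sum (m : Fin k → Fin l → ℤ) (τ τ' : Fin k → Bool) :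
    (fun j => N1 m (fun i => (τ i == τ' i, τ i)) j + N2 m (fun i => (τ i == τ' i, τ i)) j)
      = M m τ := by
  funext j
  rw [M, N1, N2, ← Finset.sum_add_distrib]
  exact Finset.sum_congr rfl fun i _ => by
    cases h : (τ i == τ' i) <;> simp

lemma N_sub (m : Fin k → Fin l → ℤ) (τ τ' : Fin k → Bool) :
    (fun j => N1 m (fun i => (τ i == τ' i, τ i)) j - N2 m (fun i => (τ i == τ' i, τ i)) j)
      = M m τ' := by
  funext j
  rw [M, N1, N2, ← Finset.sum_sub_distrib]
  refine Finset.sum_congr rfl fun i _ => ?_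
  cases hτ : τ i <;> cases hτ' : τ' i <;> simp [sZ] <;> ring

lemma e_smul (mi : Fin l → ℤ) (b : Bool) (θ : Fin l → ℝ) :
    e (fun j => sZ b * mi j) θ =
      Complex.exp ((((sZ b : ℝ) * ∑ j, (mi j : ℝ) * θ j : ℝ)) * Complex.I) := by
  unfold e
  congr 2
  push_cast
  rw [Finset.mul_sum]
  exact Finset.sum_congr rfl fun j _ => by ring

lemma factor (m : Fin k → Fin l → ℤ) (ε : Fin k → ℝ) (i : Fin k) (θ θ' : Fin l → ℝ) :
    ((Real.cos (∑ j, (m i j : ℝ) * θ j) + ε i * Real.cos (∑ j, (m i j : ℝ) * θ' j) : ℝ) : ℂ) =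
      ∑ p : Bool × Bool, ((cR ε i p.1 : ℝ) : ℂ) *
        e (fun j => sZ p.2 * m i j) (if p.1 then θ else θ') := by
  have hcos : ∀ x : ℝ, ((Real.cos x : ℝ) : ℂ) =
      (Complex.exp ((x:ℂ) * Complex.I) + Complex.exp (-(x:ℂ) * Complex.I)) / 2 := by
    intro x
    rw [Complex.ofReal_cos]
    rfl
  rw [Fintype.sum_prod_type, Complex.ofReal_add, Complex.ofReal_mul, hcos, hcos]
  simp only [Fintype.sum_bool, e_smul]
  norm_num [cR, sZ]
  push_cast
  ring

lemma prod_term (m : Fin k → Fin l → ℤ) (ε : Fin k → ℝ) (g : Fin k → Bool × Bool)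
    (θ θ' : Fin l → ℝ) :
    ∏ i, (((cR ε i (g i).1 : ℝ) : ℂ) *
        e (fun j => sZ ((g i).2) * m i j) (if (g i).1 then θ else θ')) =
      ((∏ i, cR ε i (g i).1 : ℝ) : ℂ) * (e (N1 m g) θ * e (N2 m g) θ') := by
  rw [Finset.prod_mul_distrib, Complex.ofReal_prod]
  congr 1
  have h : ∀ i : Fin k, e (fun j => sZ ((g i).2) * m i j) (if (g i).1 then θ else θ') =
      e (fun j => if (g i).1 then sZ ((g i).2) * m i j else 0) θ *
      e (fun j => if (g i).1 then 0 else sZ ((g i).2) * m i j) θ' := by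
    intro i
    cases h : (g i).1 <;> simp only [h, if_true, if_false, Bool.false_eq_true] <;>
      rw [e_zero] <;> ring
  simp_rw [h]
  rw [Finset.prod_mul_distrib, prod_e, prod_e]
  rfl

def RR (m : Fin k → Fin l → ℤ) (ε : Fin k → ℝ) : ℝ :=
  ∑ g : Fin k → Bool × Bool,
    (∏ i, cR ε i (g i).1) * ((2*π)^l * d (N1 m g)) * ((2*π)^l * d (N2 m g))

def Q (m : Fin k → Fin l → ℤ) (ε : Fin k → ℝ) : ℝ :=
  ∑ τ : Fin k → Bool, (∏ i, chi ε i (τ i)) * ((2*π)^l * d (M m τ))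

lemma RQ (m : Fin k → Fin l → ℤ) (ε : Fin k → ℝ) (hε : ∀ i, ε i = 1 ∨ ε i = -1) :
    RR m ε = (1/2)^k * (Q m ε)^2 := by
  rw [RR, ← Equiv.sum_comp (EE k).symm (fun g : Fin k → Bool × Bool =>
    (∏ i, cR ε i (g i).1) * ((2*π)^l * d (N1 m g)) * ((2*π)^l * d (N2 m g))),
    Fintype.sum_prod_type, Q, sq, Finset.sum_mul_sum, Finset.mul_sum]
  refine Finset.sum_congr rfl fun τ _ => ?_
  rw [Finset.mul_sum]
  refine Finset.sum_congr rfl fun τ' _ => ?_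
  have hg : (EE k).symm (τ, τ') = fun i => (τ i == τ' i, τ i) :=
    funext fun i => EE_symm_apply _ i
  simp only [hg]
  have hc : (∏ i, cR ε i (((fun i => (τ i == τ' i, τ i)) : Fin k → Bool × Bool) i).1) =
      (1/2)^k * (∏ i, chi ε i (τ i)) * (∏ i, chi ε i (τ' i)) := by
    calc (∏ i, cR ε i (τ i == τ' i))
        = ∏ i, (chi ε i (τ i) * chi ε i (τ' i) * (1/2)) :=
          Finset.prod_congr rfl fun i _ => by rw [coeff_id ε i (hε i)]; ring
      _ = _ := by
          rw [Finset.prod_mul_distrib, Finset.prod_mul_distrib, Finset.prod_const,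
            Finset.card_univ, Fintype.card_fin]
          ring
  have hd : d (N1 m fun i => (τ i == τ' i, τ i)) * d (N2 m fun i => (τ i == τ' i, τ i)) =
      d (M m τ) * d (M m τ') := by
    rw [dd, N_sum, N_sub]
  rw [hc]
  linear_combination ((1/2:ℝ))^k * (∏ i, chi ε i (τ i)) * (∏ i, chi ε i (τ' i)) *
    ((2*π)^l) * ((2*π)^l) * hd

lemma pointwise (m : Fin k → Fin l → ℤ) (ε : Fin k → ℝ) (θ θ' : Fin l → ℝ) :
    ((∏ i, (Real.cos (∑ j, (m i j : ℝ) * θ j) +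
        ε i * Real.cos (∑ j, (m i j : ℝ) * θ' j)) : ℝ) : ℂ) =
      ∑ g : Fin k → Bool × Bool,
        (((∏ i, cR ε i (g i).1 : ℝ) : ℂ) * e (N1 m g) θ) * e (N2 m g) θ' := by
  rw [Complex.ofReal_prod]
  calc (∏ i, ((Real.cos (∑ j, (m i j : ℝ) * θ j) +
          ε i * Real.cos (∑ j, (m i j : ℝ) * θ' j) : ℝ) : ℂ))
      = ∏ i, ∑ p : Bool × Bool, ((cR ε i p.1 : ℝ) : ℂ) *
          e (fun j => sZ p.2 * m i j) (if p.1 then θ else θ') :=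
        Finset.prod_congr rfl fun i _ => factor m ε i θ θ'
    _ = ∑ g : Fin k → Bool × Bool, ∏ i, ((cR ε i ((g i).1) : ℝ) : ℂ) *
          e (fun j => sZ ((g i).2) * m i j) (if (g i).1 then θ else θ') :=
        Fintype.prod_sum _
    _ = _ := Finset.sum_congr rfl fun g _ => by rw [prod_term]; ring

lemma inner_int (m : Fin k → Fin l → ℤ) (ε : Fin k → ℝ) (θ : Fin l → ℝ) :
    ((∫ θ' in B l, ∏ i, (Real.cos (∑ j, (m i j : ℝ) * θ j) +
        ε i * Real.cos (∑ j, (m i j : ℝ) * θ' j)) : ℝ) : ℂ) =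
      ∑ g : Fin k → Bool × Bool,
        ((((∏ i, cR ε i (g i).1) * ((2*π)^l * d (N2 m g)) : ℝ) : ℂ)) * e (N1 m g) θ := by
  rw [myOfRealIntegral]
  simp_rw [pointwise m ε θ]
  rw [integral_finset_sum _ (fun g _ => (integrableOn_e (N2 m g)).const_mul _)]
  refine Finset.sum_congr rfl fun g _ => ?_
  rw [MeasureTheory.integral_const_mul, integral_e]
  push_cast
  ring

lemma total (m : Fin k → Fin l → ℤ) (ε : Fin k → ℝ) :
    ((∫ θ in B l, ∫ θ' in B l, ∏ i, (Real.cos (∑ j, (m i j : ℝ) * θ j) +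
        ε i * Real.cos (∑ j, (m i j : ℝ) * θ' j)) : ℝ) : ℂ) = ((RR m ε : ℝ) : ℂ) := by
  rw [myOfRealIntegral]
  simp_rw [inner_int m ε]
  rw [integral_finset_sum _ (fun g _ => (integrableOn_e (N1 m g)).const_mul _)]
  rw [RR, Complex.ofReal_sum]
  refine Finset.sum_congr rfl fun g _ => ?_
  rw [MeasureTheory.integral_const_mul, integral_e]
  push_cast
  ring

end GinAux

/-- **Theorem (Statement 8, Ginibre inequality).** For all `k, l ≥ 1`, all vectors
`m₁, …, m_k ∈ ℤ^l` and all signs `ε₁, …, ε_k ∈ {−1, +1}`,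
`∫∫_{[0,2π]^l × [0,2π]^l} ∏_{i=1}^k (cos(mᵢ·θ) + εᵢ cos(mᵢ·θ′)) dθ dθ′ ≥ 0`. -/
theorem ginibre_inequality (k l : ℕ) (hk : 1 ≤ k) (hl : 1 ≤ l)
    (m : Fin k → Fin l → ℤ) (ε : Fin k → ℝ) (hε : ∀ i, ε i = 1 ∨ ε i = -1) :
    0 ≤ ∫ θ in Set.univ.pi fun _ : Fin l => Set.Icc (0 : ℝ) (2 * π),
          ∫ θ' in Set.univ.pi fun _ : Fin l => Set.Icc (0 : ℝ) (2 * π),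
            ∏ i : Fin k,
              (Real.cos (∑ j, (m i j : ℝ) * θ j) + ε i * Real.cos (∑ j, (m i j : ℝ) * θ' j)) := by
  have h1 := GinAux.total m ε
  have h2 : (∫ θ in GinAux.B l, ∫ θ' in GinAux.B l, ∏ i, (Real.cos (∑ j, (m i j : ℝ) * θ j) +
      ε i * Real.cos (∑ j, (m i j : ℝ) * θ' j))) = GinAux.RR m ε := Complex.ofReal_inj.mp h1
  show (0:ℝ) ≤ ∫ θ in GinAux.B l, ∫ θ' in GinAux.B l, ∏ i, (Real.cos (∑ j, (m i j : ℝ) * θ j) +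
      ε i * Real.cos (∑ j, (m i j : ℝ) * θ' j))
  rw [h2, GinAux.RQ m ε hε]
  positivity

end
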